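/- Let $R$ be a commutative ring and $G$ a graph. If $A$ is a degenerate singular $n$-cube in $G$ (i.e. $\delta_j^- A = \delta_j^+ A$ for some $j$), then $\partial_n(A)$ lies in the $R$-submodule of $\mathcal{L}_{n-1}(G)$ generated by the degenerate singular $(n-1)$-cubes. -/

import Mathlib

/-- Adjacency (with loops) in the hypercube graph `Q^n`. -/
def QAdj {n : ℕ} (x y : Fin n → Bool) : Prop := {j | x j ≠ y j}.Subsingleton

/-- A graph map between graphs given by their adjacency relations. -/
def IsGraphMap {V W : Type*} (E : V → V → Prop) (F : W → W → Prop) (f : V → W) : Prop :=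
  ∀ a b, E a b → F (f a) (f b)

/-- Singular `n`-cubes in the graph `(V, E)`. -/
def Cube (V : Type*) (E : V → V → Prop) (n : ℕ) :=
  {A : (Fin n → Bool) → V // IsGraphMap QAdj E A}

lemma qadj_insertNth {n : ℕ} (i : Fin (n + 1)) (ε : Bool) {x y : Fin n → Bool}
    (h : QAdj x y) : QAdj (i.insertNth ε x) (i.insertNth ε y) := by
  intro a ha b hb
  have hai : a ≠ i := by
    intro hh; subst hh; simp [Set.mem_setOf_eq, Fin.insertNth_apply_same] at ha
  have hbi : b ≠ i := by
    intro hh; subst hh; simp [Set.mem_setOf_eq, Fin.insertNth_apply_same] at hb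
  obtain ⟨a', rfl⟩ := Fin.exists_succAbove_eq hai
  obtain ⟨b', rfl⟩ := Fin.exists_succAbove_eq hbi
  simp only [Set.mem_setOf_eq, Fin.insertNth_apply_succAbove] at ha hb
  exact congrArg i.succAbove (h ha hb)

/-- The face map `δᵢ^ε` on singular cubes. -/
def faceCube {V : Type*} {E : V → V → Prop} {n : ℕ} (i : Fin (n + 1)) (ε : Bool)
    (A : Cube V E (n + 1)) : Cube V E n :=
  ⟨fun x => A.1 (i.insertNth ε x), fun a b hab => A.2 _ _ (qadj_insertNth i ε hab)⟩

/-- A singular cube is degenerate if, for some coordinate `i`, its value does not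
depend on the `i`-th coordinate (equivalently, `δᵢ⁻ A = δᵢ⁺ A`). -/
def IsDegen {V : Type*} {E : V → V → Prop} {n : ℕ} (B : Cube V E n) : Prop :=
  ∃ i : Fin n, ∀ x : Fin n → Bool,
    B.1 (Function.update x i false) = B.1 (Function.update x i true)

/-- The boundary map `∂ : 𝓛_{n+1}(G) → 𝓛_n(G)`. -/
noncomputable def boundary (V : Type*) (E : V → V → Prop) (R : Type*) [CommRing R]
    (n : ℕ) : (Cube V E (n + 1) →₀ R) →ₗ[R] (Cube V E n →₀ R) :=
  Finsupp.lift (Cube V E n →₀ R) R (Cube V E (n + 1)) fun A =>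
    ∑ i : Fin (n + 1), ((-1 : R) ^ ((i : ℕ) + 1)) •
      (Finsupp.single (faceCube i false A) (1 : R) -
        Finsupp.single (faceCube i true A) (1 : R))


lemma insertNth_update_bool {n : ℕ} (i : Fin (n + 1)) (ε : Bool) (x : Fin n → Bool)
    (j : Fin n) (b : Bool) :
    i.insertNth ε (Function.update x j b) =
      Function.update (i.insertNth ε x : Fin (n + 1) → Bool) (i.succAbove j) b := by
  ext k
  cases k using i.succAboveCases with
  | x => simp [Function.update_apply, (Fin.succAbove_ne i j).symm]
  | p k =>
    simp [Function.update_apply, Fin.succAbove_right_injective.eq_iff]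

lemma face_degen {V : Type*} {E : V → V → Prop} {n : ℕ} (A : Cube V E (n + 1))
    (j : Fin (n + 1)) (hj : ∀ x, A.1 (Function.update x j false) = A.1 (Function.update x j true))
    (i : Fin (n + 1)) (ε : Bool) (hij : i ≠ j) : IsDegen (faceCube i ε A) := by
  obtain ⟨j', rfl⟩ := Fin.exists_succAbove_eq (Ne.symm hij)
  refine ⟨j', fun x => ?_⟩
  show A.1 (i.insertNth ε (Function.update x j' false)) =
    A.1 (i.insertNth ε (Function.update x j' true))
  rw [insertNth_update_bool, insertNth_update_bool]
  exact hj _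

/-- The boundary of a degenerate singular cube lies in the submodule generated by
the degenerate singular cubes of one dimension lower. -/
theorem stmt8 {V : Type*} (E : V → V → Prop)
    (hrefl : ∀ v, E v v) (hsymm : ∀ a b, E a b → E b a)
    (R : Type*) [CommRing R] (n : ℕ) (A : Cube V E (n + 1)) (hA : IsDegen A) :
    boundary V E R n (Finsupp.single A 1) ∈
      Submodule.span R
        ((fun B => Finsupp.single B (1 : R)) '' {B : Cube V E n | IsDegen B}) := by
  obtain ⟨j, hj⟩ := hA
  have hface : faceCube j false A = faceCube j true A := by
    apply Subtype.ext; funext x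
    have := hj (j.insertNth false x)
    simpa [Fin.update_insertNth, faceCube] using this
  have hb : boundary V E R n (Finsupp.single A 1) =
      ∑ i : Fin (n + 1), ((-1 : R) ^ ((i : ℕ) + 1)) •
        (Finsupp.single (faceCube i false A) (1 : R) -
          Finsupp.single (faceCube i true A) (1 : R)) := by
    simp [boundary, Finsupp.lift_apply, Finsupp.sum_single_index]
  rw [hb]
  refine Submodule.sum_mem _ fun i _ => Submodule.smul_mem _ _ ?_
  by_cases hij : i = j
  · subst hij; rw [hface]; simp
  · refine Submodule.sub_mem _ ?_ ?_ <;>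
      exact Submodule.subset_span ⟨_, face_degen A j hj i _ hij, rfl⟩
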